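/- Let (X,d) be a complete metric space, η : [0,∞) → ℝ with η(0) = 0, and φ : X → ℝ lower semicontinuous. Assume there exist x₀ ∈ X and reals a < 0, β with φ(x) ≥ a·d(x,x₀) + β for all x ∈ X. Suppose t ↦ η(t) + a·t is nonnegative and nondecreasing on W = {d(x,y) : x,y ∈ X}, and there exist c > 0 and ε > 0 such that η(t) + a·t ≥ c·t for all t ∈ {t ≥ 0 : η(t) + a·t ≤ ε} ∩ W. Then every mapping T : X → X satisfying η(d(x,Tx)) ≤ φ(x) − φ(Tx) for all x ∈ X has a fixed point. -/
import Mathlib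

open Filter Topology

/-- Ekeland-type variational principle: a lower semicontinuous function bounded below
on a complete metric space admits a point `v` with `ψ v ≤ ψ u` such that
`ψ y + δ * dist v y ≤ ψ v` forces `y = v`. -/
lemma ekeland_aux {X : Type*} [MetricSpace X] [CompleteSpace X]
    (ψ : X → ℝ) (hlsc : LowerSemicontinuous ψ) (B : ℝ) (hB : ∀ x, B ≤ ψ x)
    (δ : ℝ) (hδ : 0 < δ) (u : X) :
    ∃ v : X, ψ v ≤ ψ u ∧ ∀ y, ψ y + δ * dist v y ≤ ψ v → y = v := by
  set S : X → Set X := fun x => {y | ψ y + δ * dist x y ≤ ψ x} with hS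
  have hself : ∀ x, x ∈ S x := by intro x; simp [hS]
  have hne : ∀ x, (ψ '' S x).Nonempty := fun x => ⟨ψ x, x, hself x, rfl⟩
  have hbdd : ∀ x, BddBelow (ψ '' S x) := fun x => ⟨B, by rintro _ ⟨y, -, rfl⟩; exact hB y⟩
  have hchoice : ∀ (x : X) (n : ℕ), ∃ y, y ∈ S x ∧ ψ y < sInf (ψ '' S x) + (1/2)^n := by
    intro x n
    obtain ⟨r, ⟨y, hy, rfl⟩, hr⟩ :=
      Real.lt_sInf_add_pos (hne x) (by positivity : (0:ℝ) < (1/2)^n)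
    exact ⟨y, hy, hr⟩
  choose f hf1 hf2 using hchoice
  set x : ℕ → X := fun n => Nat.rec u (fun n xn => f xn n) n with hx
  have hx0 : x 0 = u := rfl
  have hmem : ∀ n, x (n+1) ∈ S (x n) := fun n => hf1 (x n) n
  have htrans : ∀ w y z : X, y ∈ S w → z ∈ S y → z ∈ S w := by
    intro w y z h1 h2
    have htri := dist_triangle w y z
    simp only [hS, Set.mem_setOf_eq] at h1 h2 ⊢
    nlinarith [h1, h2, htri]
  have hchain : ∀ n m, n ≤ m → x m ∈ S (x n) := by
    intro n m h
    induction m, h using Nat.le_induction with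
    | base => exact hself _
    | succ m hm ih => exact htrans _ _ _ ih (hmem m)
  have hanti : ∀ n m, n ≤ m → ψ (x m) ≤ ψ (x n) := by
    intro n m h
    have h2 := hchain n m h
    simp only [hS, Set.mem_setOf_eq] at h2
    nlinarith [dist_nonneg (x := x n) (y := x m)]
  have hbdd' : BddBelow (Set.range fun n => ψ (x n)) :=
    ⟨B, by rintro _ ⟨n, rfl⟩; exact hB _⟩
  set L : ℝ := ⨅ n, ψ (x n) with hL
  have htend : Tendsto (fun n => ψ (x n)) atTop (𝓝 L) :=
    tendsto_atTop_ciInf (fun n m h => hanti n m h) hbdd'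
  have hLle : ∀ n, L ≤ ψ (x n) := fun n => ciInf_le hbdd' n
  have hdist : ∀ n m, n ≤ m → dist (x n) (x m) ≤ (ψ (x n) - ψ (x m)) / δ := by
    intro n m h
    have h2 := hchain n m h
    simp only [hS, Set.mem_setOf_eq] at h2
    rw [le_div_iff₀ hδ]
    nlinarith [h2]
  have hcauchy : CauchySeq x := by
    apply cauchySeq_of_le_tendsto_0 (fun N => (ψ (x N) - L) / δ)
    · intro n m N hn hm
      rcases le_total n m with h | h
      · calc dist (x n) (x m) ≤ (ψ (x n) - ψ (x m)) / δ := hdist n m h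
          _ ≤ (ψ (x N) - L) / δ := by gcongr; exacts [hanti N n hn, hLle m]
      · calc dist (x n) (x m) = dist (x m) (x n) := dist_comm _ _
          _ ≤ (ψ (x m) - ψ (x n)) / δ := hdist m n h
          _ ≤ (ψ (x N) - L) / δ := by gcongr; exacts [hanti N m hm, hLle n]
    · have : Tendsto (fun N => (ψ (x N) - L) / δ) atTop (𝓝 ((L - L) / δ)) :=
        (htend.sub_const L).div_const δ
      simpa using this
  obtain ⟨v, hv⟩ := cauchySeq_tendsto_of_complete hcauchy
  have hclosed : ∀ n, IsClosed (S n) := by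
    intro w
    have hcont : Continuous (fun y => δ * dist w y) :=
      continuous_const.mul (continuous_const.dist continuous_id)
    have : LowerSemicontinuous (fun y => ψ y + δ * dist w y) :=
      hlsc.add hcont.lowerSemicontinuous
    exact this.isClosed_preimage (ψ w)
  have hvS : ∀ n, v ∈ S (x n) := fun n =>
    (hclosed (x n)).mem_of_tendsto hv (eventually_atTop.2 ⟨n, fun m hm => hchain n m hm⟩)
  have hψv : ∀ n, ψ v ≤ ψ (x n) := by
    intro n
    have h2 := hvS n
    simp only [hS, Set.mem_setOf_eq] at h2
    nlinarith [dist_nonneg (x := x n) (y := v)]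
  refine ⟨v, by simpa [hx0] using hψv 0, ?_⟩
  intro y hy
  have hyS : y ∈ S v := hy
  have hψvy : ψ v ≤ ψ y := by
    by_contra hcon
    push_neg at hcon
    obtain ⟨n, hn⟩ := exists_pow_lt_of_lt_one (by linarith : (0:ℝ) < ψ v - ψ y)
      (by norm_num : (1:ℝ)/2 < 1)
    have hyn : y ∈ S (x n) := htrans _ _ _ (hvS n) hyS
    have hinf : sInf (ψ '' S (x n)) ≤ ψ y := csInf_le (hbdd _) ⟨y, hyn, rfl⟩
    have h1 := hf2 (x n) n
    have h2 := hψv (n + 1)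
    simp only [hx] at h2 h1
    linarith [h1, h2, hinf, hn]
  have : dist v y ≤ 0 := by nlinarith [hy]
  exact (dist_le_zero.mp this).symm

/-- Li's Theorem 1, case (ii). -/
theorem li_theorem1_case_ii {X : Type*} [MetricSpace X] [CompleteSpace X] [Nonempty X]
    (η : ℝ → ℝ) (hη0 : η 0 = 0)
    (φ : X → ℝ) (hlsc : LowerSemicontinuous φ)
    (x₀ : X) (a β : ℝ) (ha : a < 0)
    (hφ : ∀ x, a * dist x x₀ + β ≤ φ x)
    (hnn : ∀ t ∈ {t : ℝ | ∃ x y : X, dist x y = t}, 0 ≤ η t + a * t)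
    (hmono : ∀ s ∈ {t : ℝ | ∃ x y : X, dist x y = t},
      ∀ t ∈ {t : ℝ | ∃ x y : X, dist x y = t}, s ≤ t → η s + a * s ≤ η t + a * t)
    (c ε : ℝ) (hc : 0 < c) (hε : 0 < ε)
    (hgrow : ∀ t ∈ {t : ℝ | 0 ≤ t ∧ η t + a * t ≤ ε} ∩ {t : ℝ | ∃ x y : X, dist x y = t},
      c * t ≤ η t + a * t)
    (T : X → X) (hT : ∀ x, η (dist x (T x)) ≤ φ x - φ (T x)) :
    ∃ x, T x = x := by
  -- work with ψ x = φ x + (-a) * dist x x₀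
  set ψ : X → ℝ := fun x => φ x + (-a) * dist x x₀ with hψdef
  have hψlsc : LowerSemicontinuous ψ :=
    hlsc.add (continuous_const.mul (continuous_id.dist continuous_const)).lowerSemicontinuous
  have hψB : ∀ x, β ≤ ψ x := by
    intro x
    have := hφ x
    simp only [hψdef]
    linarith
  -- Caristi-type inequality for ψ
  have hCaristi : ∀ x : X, η (dist x (T x)) + a * dist x (T x) ≤ ψ x - ψ (T x) := by
    intro x
    have h1 := hT x
    have htri : dist (T x) x₀ ≤ dist (T x) x + dist x x₀ := dist_triangle _ _ _
    have hcomm : dist (T x) x = dist x (T x) := dist_comm _ _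
    simp only [hψdef]
    nlinarith [h1, htri, hcomm]
  -- infimum of ψ
  have hbdd : BddBelow (Set.range ψ) := ⟨β, by rintro _ ⟨x, rfl⟩; exact hψB x⟩
  set M : ℝ := ⨅ x, ψ x with hM
  have hMlt : M < M + ε := by linarith
  obtain ⟨u, hu⟩ := exists_lt_of_ciInf_lt hMlt
  -- apply the Ekeland-type lemma with δ = c/2
  obtain ⟨v, hvu, hvkey⟩ := ekeland_aux ψ hψlsc β hψB (c/2) (by positivity) u
  have hMall : ∀ x : X, M ≤ ψ x := fun x => ciInf_le hbdd x
  clear hψdef hM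
  clear_value M ψ
  refine ⟨v, ?_⟩
  apply hvkey
  -- show ψ (T v) + (c/2) * dist v (T v) ≤ ψ v
  set d : ℝ := dist v (T v) with hd
  have hdW : d ∈ {t : ℝ | ∃ x y : X, dist x y = t} := ⟨v, T v, rfl⟩
  have hMTv : M ≤ ψ (T v) := hMall (T v)
  have hCv := hCaristi v
  rw [← hd] at hCv
  have hsmall : η d + a * d ≤ ε := by
    have : ψ v ≤ M + ε := le_of_lt (lt_of_le_of_lt hvu hu)
    linarith [hCv]
  have hcd : c * d ≤ η d + a * d := hgrow d ⟨⟨dist_nonneg, hsmall⟩, hdW⟩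
  have hdnn : (0:ℝ) ≤ d := dist_nonneg
  clear_value d
  have hring : c * d = 2 * (c / 2 * d) := by ring
  nlinarith [hCv, hcd, hdnn, mul_nonneg (le_of_lt hc) hdnn, hring]
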